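/- In the braid group B(A_n), the band generators a_{ts} and a_{rq} commute whenever (t−r)(t−q)(s−r)(s−q) > 0 (i.e. the intervals [s,t] and [q,r] are disjoint or nested). -/

import Mathlib

/-- The conjugating word `σ_{t-1} σ_{t-2} ⋯ σ_{s+1}`. -/
def bandWord {G : Type*} [Group G] (σ : ℕ → G) (t s : ℕ) : G :=
  (((List.range' (s + 1) (t - 1 - s)).reverse).map σ).prod

/-- The band generator `a_{ts} = (σ_{t-1}⋯σ_{s+1}) σ_s (σ_{t-1}⋯σ_{s+1})⁻¹`. -/
def bandGen {G : Type*} [Group G] (σ : ℕ → G) (t s : ℕ) : G :=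
  bandWord σ t s * σ s * (bandWord σ t s)⁻¹

section Aux

variable {G : Type*} [Group G] {σ : ℕ → G}

lemma range'_split (a m k : ℕ) :
    List.range' a (m + k) = List.range' a m ++ List.range' (a + m) k := by
  have h := List.range'_append (s := a) (m := m) (n := k) (step := 1)
  simp only [one_mul] at h
  exact h.symm

lemma commute_bandWord {x : G} {t s : ℕ}
    (h : ∀ i, s + 1 ≤ i → i < t → Commute x (σ i)) :
    Commute x (bandWord σ t s) := by
  apply Commute.list_prod_right
  intro y hy
  simp only [List.mem_map, List.mem_reverse, List.mem_range'] at hy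
  obtain ⟨i, ⟨k, hk, rfl⟩, rfl⟩ := hy
  exact h _ (by omega) (by omega)

lemma commute_bandGen {x : G} {t s : ℕ} (hts : s < t)
    (h : ∀ i, s ≤ i → i < t → Commute x (σ i)) :
    Commute x (bandGen σ t s) := by
  have hW : Commute x (bandWord σ t s) :=
    commute_bandWord (fun i hi1 hi2 => h i (by omega) hi2)
  unfold bandGen
  exact (hW.mul_right (h s le_rfl hts)).mul_right hW.inv_right

lemma bandWord_split {r q i : ℕ} (h1 : q + 1 ≤ i) (h2 : i + 2 ≤ r) :
    bandWord σ r q = bandWord σ r (i + 1) * (σ (i + 1) * (σ i * bandWord σ i q)) := by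
  unfold bandWord
  have hlen : r - 1 - q = (i - 1 - q) + (2 + (r - 1 - (i + 1))) := by omega
  rw [hlen, range'_split, range'_split]
  have hi : q + 1 + (i - 1 - q) = i := by omega
  rw [hi]
  have h2l : List.range' i 2 = [i, i + 1] := rfl
  rw [h2l]
  simp [List.reverse_append, mul_assoc]

/-- The key shift identity: conjugating `σ i` by `(bandWord σ r q)⁻¹` gives `σ (i+1)`,
for `q + 1 ≤ i ≤ r - 2`. -/
lemma semiconj_bandWord_sigma {n : ℕ}
    (hbraid : ∀ i, 1 ≤ i → i + 1 ≤ n → σ i * σ (i + 1) * σ i = σ (i + 1) * σ i * σ (i + 1))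
    (hcomm : ∀ i j, 1 ≤ i → i + 2 ≤ j → j ≤ n → σ i * σ j = σ j * σ i)
    {r q i : ℕ} (hq : 1 ≤ q) (h1 : q + 1 ≤ i) (h2 : i + 2 ≤ r) (hr : r ≤ n + 1) :
    SemiconjBy (bandWord σ r q) (σ (i + 1)) (σ i) := by
  rw [bandWord_split h1 h2]
  have hAc : Commute (σ i) (bandWord σ r (i + 1)) :=
    commute_bandWord (fun j hj1 hj2 => hcomm i j (by omega) (by omega) (by omega))
  have hBc : Commute (σ (i + 1)) (bandWord σ i q) :=
    commute_bandWord (fun j hj1 hj2 =>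
      (show Commute (σ j) (σ (i + 1)) from hcomm j (i + 1) (by omega) (by omega) (by omega)).symm)
  have hbr : SemiconjBy (σ (i + 1) * σ i) (σ (i + 1)) (σ i) := by
    have h := hbraid i (by omega) (by omega)
    show σ (i + 1) * σ i * σ (i + 1) = σ i * (σ (i + 1) * σ i)
    simp only [mul_assoc] at h ⊢
    exact h.symm
  have inner : SemiconjBy ((σ (i + 1) * σ i) * bandWord σ i q) (σ (i + 1)) (σ i) :=
    SemiconjBy.mul_left hbr hBc.symm
  have outer : SemiconjBy (bandWord σ r (i + 1) * ((σ (i + 1) * σ i) * bandWord σ i q))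
      (σ (i + 1)) (σ i) := SemiconjBy.mul_left hAc.symm inner
  have he : bandWord σ r (i + 1) * (σ (i + 1) * (σ i * bandWord σ i q)) =
      bandWord σ r (i + 1) * ((σ (i + 1) * σ i) * bandWord σ i q) := by
    simp [mul_assoc]
  rw [he]
  exact outer

lemma semiconj_list {C : G} :
    ∀ l : List ℕ, (∀ i ∈ l, SemiconjBy C (σ (i + 1)) (σ i)) →
      SemiconjBy C ((l.map (fun i => σ (i + 1))).prod) ((l.map σ).prod) := by
  intro l
  induction l with
  | nil => intro _; simp only [List.map_nil, List.prod_nil]; exact SemiconjBy.one_right C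
  | cons a l ih =>
      intro h
      simp only [List.map_cons, List.prod_cons]
      exact (h a (List.mem_cons_self (a := a) (l := l))).mul_right (ih (fun i hi => h i (List.mem_cons_of_mem a hi)))

lemma semiconj_bandWord_bandWord {n : ℕ}
    (hbraid : ∀ i, 1 ≤ i → i + 1 ≤ n → σ i * σ (i + 1) * σ i = σ (i + 1) * σ i * σ (i + 1))
    (hcomm : ∀ i j, 1 ≤ i → i + 2 ≤ j → j ≤ n → σ i * σ j = σ j * σ i)
    {r q t s : ℕ} (hq : 1 ≤ q) (hqs : q < s) (htr : t < r) (hr : r ≤ n + 1) :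
    SemiconjBy (bandWord σ r q) (bandWord σ (t + 1) (s + 1)) (bandWord σ t s) := by
  have hmap : (List.range' (s + 1) (t - 1 - s)).reverse.map (fun i => i + 1)
      = (List.range' (s + 2) (t + 1 - 1 - (s + 1))).reverse := by
    rw [List.map_reverse]
    congr 1
    have := List.map_add_range' (a := 1) (s + 1) (t - 1 - s) 1
    have he : (fun i => i + 1) = (fun x => 1 + x) := by
      funext x; omega
    rw [he, this]
    congr 1 <;> omega
  have key := semiconj_list (C := bandWord σ r q) ((List.range' (s + 1) (t - 1 - s)).reverse)
    (by
      intro i hi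
      simp only [List.mem_reverse, List.mem_range'] at hi
      obtain ⟨k, hk, rfl⟩ := hi
      exact semiconj_bandWord_sigma hbraid hcomm hq (by omega) (by omega) hr)
  unfold bandWord
  rw [← hmap, List.map_map]
  exact key

lemma semiconj_bandWord_bandGen {n : ℕ}
    (hbraid : ∀ i, 1 ≤ i → i + 1 ≤ n → σ i * σ (i + 1) * σ i = σ (i + 1) * σ i * σ (i + 1))
    (hcomm : ∀ i j, 1 ≤ i → i + 2 ≤ j → j ≤ n → σ i * σ j = σ j * σ i)
    {r q t s : ℕ} (hq : 1 ≤ q) (hqs : q < s) (hst : s < t) (htr : t < r) (hr : r ≤ n + 1) :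
    SemiconjBy (bandWord σ r q) (bandGen σ (t + 1) (s + 1)) (bandGen σ t s) := by
  have hW := semiconj_bandWord_bandWord hbraid hcomm hq hqs htr hr
  have hs : SemiconjBy (bandWord σ r q) (σ (s + 1)) (σ s) :=
    semiconj_bandWord_sigma hbraid hcomm hq (by omega) (by omega) hr
  unfold bandGen
  exact (hW.mul_right hs).mul_right hW.inv_right

end Aux

/-- In the braid group `B(A_n)`, the band generators `a_{ts}` and `a_{rq}` commute whenever
`(t−r)(t−q)(s−r)(s−q) > 0`. -/
theorem band_generators_commute {G : Type*} [Group G] (n : ℕ) (σ : ℕ → G)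
    (hbraid : ∀ i, 1 ≤ i → i + 1 ≤ n → σ i * σ (i + 1) * σ i = σ (i + 1) * σ i * σ (i + 1))
    (hcomm : ∀ i j, 1 ≤ i → i + 2 ≤ j → j ≤ n → σ i * σ j = σ j * σ i)
    (t s r q : ℕ) (ht : t ≤ n + 1) (hts : s < t) (hs : 1 ≤ s)
    (hr : r ≤ n + 1) (hrq : q < r) (hq : 1 ≤ q)
    (hpos : 0 < ((t : ℤ) - r) * ((t : ℤ) - q) * ((s : ℤ) - r) * ((s : ℤ) - q)) :
    bandGen σ t s * bandGen σ r q = bandGen σ r q * bandGen σ t s := by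
  -- a helper for the disjoint case (smaller interval strictly below the bigger one)
  have disjoint : ∀ t' s' r' q' : ℕ, s' < t' → q' < r' → 1 ≤ q' → r' < s' → t' ≤ n + 1 →
      Commute (bandGen σ t' s') (bandGen σ r' q') := by
    intro t' s' r' q' hts' hrq' hq' hrs' ht'
    apply commute_bandGen (by omega)
    intro i hi1 hi2
    exact (commute_bandGen (x := σ i) (t := t') (s := s') (by omega) (fun j hj1 hj2 =>
      show Commute (σ i) (σ j) from hcomm i j (by omega) (by omega) (by omega))).symm
  -- a helper for the nested case: [s',t'] strictly inside [q',r']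
  have nested : ∀ t' s' r' q' : ℕ, s' < t' → 1 ≤ q' → q' < s' → t' < r' → r' ≤ n + 1 →
      Commute (bandGen σ t' s') (bandGen σ r' q') := by
    intro t' s' r' q' hts' hq' hqs' htr' hr'
    have hsc := semiconj_bandWord_bandGen hbraid hcomm hq' hqs' hts' htr' hr'
    -- bandGen σ t' s' = C * bandGen σ (t'+1) (s'+1) * C⁻¹  where C = bandWord σ r' q'
    have hgen : bandGen σ t' s'
        = (MulAut.conj (bandWord σ r' q')) (bandGen σ (t' + 1) (s' + 1)) := by
      rw [MulAut.conj_apply, eq_mul_inv_iff_mul_eq]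
      exact hsc.eq.symm
    have hrq2 : bandGen σ r' q' = (MulAut.conj (bandWord σ r' q')) (σ q') := by
      rw [MulAut.conj_apply]; rfl
    rw [hgen, hrq2]
    have hc : Commute (bandGen σ (t' + 1) (s' + 1)) (σ q') := by
      apply Commute.symm
      apply commute_bandGen (by omega)
      intro j hj1 hj2
      exact show Commute (σ q') (σ j) from hcomm q' j (by omega) (by omega) (by omega)
    exact hc.map ((MulAut.conj (bandWord σ r' q')).toMonoidHom)
  -- sign analysis
  rcases Nat.lt_or_ge r s with h1 | h1
  · exact (disjoint t s r q hts hrq hq h1 ht).eq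
  rcases Nat.lt_or_ge t q with h2 | h2
  · exact ((disjoint r q t s hrq hts hs h2 hr).symm).eq
  -- now s ≤ r and q ≤ t; factors are nonzero, so s < r and q < t
  have hsr : s < r := by
    rcases Nat.lt_or_ge s r with h | h
    · exact h
    · exfalso
      have : (s : ℤ) - r = 0 := by omega
      rw [this] at hpos; simp at hpos
  have hqt : q < t := by
    rcases Nat.lt_or_ge q t with h | h
    · exact h
    · exfalso
      have : (t : ℤ) - q = 0 := by omega
      rw [this] at hpos; simp at hpos
  -- (t-q) > 0, (s-r) < 0, so (t-r)*(s-q) < 0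
  have hB : (0 : ℤ) < (t : ℤ) - q := by omega
  have hC : (s : ℤ) - r < 0 := by omega
  have hAD : ((t : ℤ) - r) * ((s : ℤ) - q) < 0 := by
    by_contra h
    push_neg at h
    have hBC : ((t : ℤ) - q) * ((s : ℤ) - r) < 0 := mul_neg_of_pos_of_neg hB hC
    have hle : (((t : ℤ) - r) * ((s : ℤ) - q)) * (((t : ℤ) - q) * ((s : ℤ) - r)) ≤ 0 :=
      mul_nonpos_of_nonneg_of_nonpos h hBC.le
    have heq : (((t : ℤ) - r) * ((s : ℤ) - q)) * (((t : ℤ) - q) * ((s : ℤ) - r))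
        = ((t : ℤ) - r) * ((t : ℤ) - q) * ((s : ℤ) - r) * ((s : ℤ) - q) := by ring
    linarith [heq ▸ hle]
  rcases lt_trichotomy ((t : ℤ) - r) 0 with hA | hA | hA
  · -- t < r, hence q < s : nested [s,t] ⊂ [q,r]
    have htr : t < r := by omega
    have hqs : q < s := by
      by_contra h
      push_neg at h
      have hD : ((s : ℤ) - q) ≤ 0 := by omega
      have : 0 ≤ ((t : ℤ) - r) * ((s : ℤ) - q) := by nlinarith
      linarith
    exact (nested t s r q hts hq hqs htr hr).eq
  · exfalso; rw [hA] at hAD; simp at hAD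
  · -- r < t, hence s < q : nested [q,r] ⊂ [s,t]
    have hrt : r < t := by omega
    have hsq : s < q := by
      by_contra h
      push_neg at h
      have hD : (0 : ℤ) ≤ ((s : ℤ) - q) := by omega
      have : 0 ≤ ((t : ℤ) - r) * ((s : ℤ) - q) := mul_nonneg hA.le hD
      linarith
    exact ((nested r q t s hrq hs hsq hrt ht).symm).eq
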